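/- arXiv:2410.19220 — 3 statements merged into one kernel-verified Lean document; each statement's English description precedes it below -/
import Mathlib

section
/- Let q be a prime, n ≥ 1, and let R_q := (ZMod q)[X] ⧸ (X^n + 1). Let l, m be positive integers, A an l × (2l + l·m) matrix, T a 2l × (l·m) matrix, L an invertible l × l matrix, and G an l × (l·m) matrix over R_q, such that A · [T ; I_{l·m}] = L·G. Let w ∈ R_q^l, p ∈ R_q^{2l + l·m}, and d ∈ R_q^{l·m} satisfy G·d = L⁻¹·(w − A·p). Then the vector u := p + [T ; I_{l·m}]·d satisfies A·u = w. (Correctness of the Gaussian preimage sampler MLSamplePre.) -/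
open Matrix Polynomial

/-- `R_q := (ZMod q)[X] ⧸ (X^n + 1)`. -/
abbrev Rq (q n : ℕ) : Type :=
  Polynomial (ZMod q) ⧸ Ideal.span {(Polynomial.X : Polynomial (ZMod q)) ^ n + 1}

/-- Correctness of the Gaussian preimage sampler `MLSamplePre`:
if `A · [T ; I] = L·G` with `L` invertible, and `G·d = L⁻¹·(w − A·p)`,
then `u := p + [T ; I]·d` satisfies `A·u = w`. -/
theorem mlsamplepre_correct (q n : ℕ) (hq : q.Prime) (hn : 1 ≤ n)
    (l m : ℕ) (hl : 0 < l) (hm : 0 < m)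
    (A : Matrix (Fin l) (Fin (2 * l) ⊕ Fin (l * m)) (Rq q n))
    (T : Matrix (Fin (2 * l)) (Fin (l * m)) (Rq q n))
    (L : Matrix (Fin l) (Fin l) (Rq q n)) (hL : IsUnit L)
    (G : Matrix (Fin l) (Fin (l * m)) (Rq q n))
    (hA : A * Matrix.fromRows T (1 : Matrix (Fin (l * m)) (Fin (l * m)) (Rq q n)) = L * G)
    (w : Fin l → Rq q n)
    (p : Fin (2 * l) ⊕ Fin (l * m) → Rq q n)
    (d : Fin (l * m) → Rq q n)
    (hd : G *ᵥ d = L⁻¹ *ᵥ (w - A *ᵥ p)) :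
    A *ᵥ (p + Matrix.fromRows T (1 : Matrix (Fin (l * m)) (Fin (l * m)) (Rq q n)) *ᵥ d) = w := by
  have hdet : IsUnit L.det := (Matrix.isUnit_iff_isUnit_det L).mp hL
  rw [Matrix.mulVec_add, Matrix.mulVec_mulVec, hA, ← Matrix.mulVec_mulVec, hd,
    Matrix.mulVec_mulVec, Matrix.mul_nonsing_inv L hdet, Matrix.one_mulVec]
  abel
end

section
/- Let q be a prime, n ≥ 1, and let R_q := (ZMod q)[X] ⧸ (X^n + 1). Let l, m be positive integers, B' an l × 2l matrix, T a 2l × (l·m) matrix, and G an l × (l·m) matrix over R_q, and set A := [B' | G − B'·T]. Let σ₁ ∈ R_q^l, and suppose p ∈ R_q^{2l + l·m} and d ∈ R_q^{l·m} satisfy G·d = σ₁ − A·p. Then σ₂ := p + [T ; I_{l·m}]·d satisfies A·σ₂ = σ₁. (Correctness of signing: an honestly generated signature component σ₂ passes the verification check A·σ₂ = σ₁ mod q, where A is produced by MLTrapGen with L = I.) -/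
open Matrix Polynomial

/-- Correctness of signing: with `A := [B' | G − B'·T]` (output of `MLTrapGen` with `L = I`),
if `G·d = σ₁ − A·p` then `σ₂ := p + [T ; I]·d` passes the verification check `A·σ₂ = σ₁`. -/
theorem mlsign_verifies (q n : ℕ) (hq : q.Prime) (hn : 1 ≤ n)
    (l m : ℕ) (hl : 0 < l) (hm : 0 < m)
    (B' : Matrix (Fin l) (Fin (2 * l)) (Rq q n))
    (T : Matrix (Fin (2 * l)) (Fin (l * m)) (Rq q n))
    (G : Matrix (Fin l) (Fin (l * m)) (Rq q n))
    (A : Matrix (Fin l) (Fin (2 * l) ⊕ Fin (l * m)) (Rq q n))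
    (hA : A = Matrix.fromCols B' (G - B' * T))
    (σ₁ : Fin l → Rq q n)
    (p : Fin (2 * l) ⊕ Fin (l * m) → Rq q n)
    (d : Fin (l * m) → Rq q n)
    (hd : G *ᵥ d = σ₁ - A *ᵥ p)
    (σ₂ : Fin (2 * l) ⊕ Fin (l * m) → Rq q n)
    (hσ₂ : σ₂ = p + Matrix.fromRows T (1 : Matrix (Fin (l * m)) (Fin (l * m)) (Rq q n)) *ᵥ d) :
    A *ᵥ σ₂ = σ₁ := by
  subst hσ₂
  rw [mulVec_add, fromRows_mulVec, one_mulVec]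
  rw [hA] at hd ⊢
  rw [fromCols_mulVec_sumElim, sub_mulVec, mulVec_mulVec, hd]
  abel
end

section
/- Let q ≥ 2 be an integer, n, m positive integers, A an n × m matrix over ZMod q, and s > 0 a real number. Suppose σ, σ' ∈ ℤ^m satisfy σ ≠ σ', ‖σ‖ ≤ s·√m, ‖σ'‖ ≤ s·√m (Euclidean norms of the corresponding real vectors), and A·(σ mod q) = A·(σ' mod q). Then x := σ − σ' satisfies: x ≠ 0, A·(x mod q) = 0, and ‖x‖ ≤ 2·s·√m. (A collision in the trapdoor function f_A on the domain D_n = { e ∈ ℤ^m : ‖e‖ ≤ s√m } yields a solution to the SIS problem with bound β = 2s√m; this is the core of Theorem 2 and of the unforgeability reduction.) -/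
open Matrix

/-- The Euclidean norm of an integer vector, viewed as a vector in `ℝ^m`. -/
noncomputable def intEuclideanNorm {m : ℕ} (x : Fin m → ℤ) : ℝ :=
  Real.sqrt (∑ i, ((x i : ℝ)) ^ 2)

lemma intEuclideanNorm_eq {m : ℕ} (x : Fin m → ℤ) :
    intEuclideanNorm x = ‖(WithLp.equiv 2 (Fin m → ℝ)).symm (fun i => (x i : ℝ))‖ := by
  rw [EuclideanSpace.norm_eq, intEuclideanNorm]
  congr 1
  exact Finset.sum_congr rfl fun i _ => by
    rw [Real.norm_eq_abs, sq_abs, WithLp.equiv_symm_apply, WithLp.ofLp_toLp]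

/-- A collision in the trapdoor function `f_A` on the domain
`D_n = { e ∈ ℤ^m : ‖e‖ ≤ s√m }` yields a SIS solution with bound `2s√m`. -/
theorem collision_gives_SIS (q : ℕ) (hq : 2 ≤ q) (n m : ℕ) (hn : 0 < n) (hm : 0 < m)
    (A : Matrix (Fin n) (Fin m) (ZMod q)) (s : ℝ) (hs : 0 < s)
    (σ σ' : Fin m → ℤ) (hne : σ ≠ σ')
    (hσ : intEuclideanNorm σ ≤ s * Real.sqrt m)
    (hσ' : intEuclideanNorm σ' ≤ s * Real.sqrt m)
    (hcol : (A *ᵥ fun i => ((σ i : ℤ) : ZMod q)) = A *ᵥ fun i => ((σ' i : ℤ) : ZMod q)) :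
    σ - σ' ≠ 0 ∧ (A *ᵥ fun i => (((σ - σ') i : ℤ) : ZMod q)) = 0 ∧
      intEuclideanNorm (σ - σ') ≤ 2 * s * Real.sqrt m := by
  refine ⟨sub_ne_zero.mpr hne, ?_, ?_⟩
  · have : (fun i => (((σ - σ') i : ℤ) : ZMod q)) =
        (fun i => ((σ i : ℤ) : ZMod q)) - (fun i => ((σ' i : ℤ) : ZMod q)) := by
      funext i; simp [Pi.sub_apply]
    rw [this, mulVec_sub, hcol, sub_self]
  · have h : (WithLp.equiv 2 (Fin m → ℝ)).symm (fun i => (((σ - σ') i : ℤ) : ℝ)) =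
        (WithLp.equiv 2 (Fin m → ℝ)).symm (fun i => ((σ i : ℤ) : ℝ)) -
        (WithLp.equiv 2 (Fin m → ℝ)).symm (fun i => ((σ' i : ℤ) : ℝ)) := by
      rw [WithLp.equiv_symm_apply, ← WithLp.toLp_sub]
      congr 1; funext i; simp [Pi.sub_apply]
    rw [intEuclideanNorm_eq, h]
    calc _ ≤ _ := norm_sub_le _ _
    _ ≤ s * Real.sqrt m + s * Real.sqrt m := by
        rw [← intEuclideanNorm_eq, ← intEuclideanNorm_eq]; exact add_le_add hσ hσ'
    _ = 2 * s * Real.sqrt m := by ring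
end
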